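/- Let N and N₀ be positive integers with N ≥ N₀. For i = 1, …, N let α_i ∈ [0, 1] and b_i ∈ ℝ with b_i ≥ 0. Assume that ∑_{i=1}^{N} α_i ≥ N₀. Let (b_i*)_{i=1}^{N} denote the sequence (b_i) rearranged in increasing order. Then ∑_{i=1}^{N} α_i b_i ≥ ∑_{i=1}^{N₀} b_i*. -/
import Mathlib

open Finset

lemma key_lemma (N N₀ : ℕ) (hN : N₀ ≤ N) (β c : ℕ → ℝ)
    (hβ0 : ∀ i, 0 ≤ β i) (hβ1 : ∀ i, β i ≤ 1)
    (hc0 : ∀ i, 0 ≤ c i) (hmono : Monotone c)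
    (hsum : (N₀ : ℝ) ≤ ∑ i ∈ Finset.range N, β i) :
    ∑ i ∈ Finset.range N₀, c i ≤ ∑ i ∈ Finset.range N, β i * c i := by
  set ind : ℕ → ℝ := fun i => if i < N₀ then (1 : ℝ) else 0 with hind
  have hfilter : (Finset.range N).filter (fun i => i < N₀) = Finset.range N₀ := by
    ext i; simp [Finset.mem_filter]; omega
  have hLHS : ∑ i ∈ Finset.range N₀, c i = ∑ i ∈ Finset.range N, ind i * c i := by
    rw [← hfilter, Finset.sum_filter]
    apply Finset.sum_congr rfl
    intro i _
    by_cases h : i < N₀ <;> simp [hind, h]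
  rw [hLHS, ← sub_nonneg, ← Finset.sum_sub_distrib]
  have hrw : ∀ i, β i * c i - ind i * c i = (β i - ind i) * c i := by
    intro i; ring
  simp_rw [hrw]
  -- g k = c (k-1), with g 0 = 0
  set g : ℕ → ℝ := fun k => if k = 0 then 0 else c (k - 1) with hg
  set e : ℕ → ℝ := fun k => g (k + 1) - g k with he
  have hce : ∀ i, c i = ∑ k ∈ Finset.range (i + 1), e k := by
    intro i
    rw [he, Finset.sum_range_sub g]
    simp [hg]
  have he0 : ∀ k, 0 ≤ e k := by
    intro k
    rcases Nat.eq_zero_or_pos k with h | h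
    · subst h; simpa [he, hg] using hc0 0
    · have hne : k ≠ 0 := h.ne'
      have hek : e k = c k - c (k - 1) := by
        simp only [he, hg]
        rw [if_neg (by omega), if_neg hne, Nat.add_sub_cancel]
      have := hmono (Nat.sub_le k 1)
      linarith
  -- partial sums of β are at most k
  have hβsum : ∀ k, ∑ i ∈ Finset.range k, β i ≤ (k : ℝ) := by
    intro k
    calc ∑ i ∈ Finset.range k, β i ≤ ∑ i ∈ Finset.range k, (1 : ℝ) :=
          Finset.sum_le_sum fun i _ => hβ1 i
      _ = k := by simp
  -- tail sums are nonneg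
  have hT : ∀ k, 0 ≤ ∑ i ∈ Finset.Ico k N, (β i - ind i) := by
    intro k
    by_cases hk : k < N₀
    · have hkN : k ≤ N := le_trans hk.le hN
      have h1 : ∑ i ∈ Finset.Ico k N, ind i = ((N₀ - k : ℕ) : ℝ) := by
        have : ∑ i ∈ Finset.Ico k N, ind i
            = ∑ i ∈ (Finset.Ico k N).filter (fun i => i < N₀), (1 : ℝ) := by
          rw [Finset.sum_filter]
        rw [this]
        have : (Finset.Ico k N).filter (fun i => i < N₀) = Finset.Ico k N₀ := by
          ext i; simp [Finset.mem_filter]; omega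
        rw [this]
        simp [Nat.card_Ico]
      rw [Finset.sum_sub_distrib, h1]
      have h2 : ∑ i ∈ Finset.Ico k N, β i
          = ∑ i ∈ Finset.range N, β i - ∑ i ∈ Finset.range k, β i :=
        Finset.sum_Ico_eq_sub β hkN
      rw [h2]
      have h3 : ((N₀ - k : ℕ) : ℝ) = (N₀ : ℝ) - k := by
        have : k ≤ N₀ := hk.le
        push_cast [Nat.cast_sub this]
        ring
      have := hβsum k
      rw [h3]
      linarith
    · have : ∀ i ∈ Finset.Ico k N, (0:ℝ) ≤ β i - ind i := by
        intro i hi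
        have : ¬ i < N₀ := by
          simp [Finset.mem_Ico] at hi; omega
        simp [hind, this]
        exact hβ0 i
      exact Finset.sum_nonneg this
  -- main computation
  have hmain : ∑ i ∈ Finset.range N, (β i - ind i) * c i
      = ∑ k ∈ Finset.range N, e k * ∑ i ∈ Finset.Ico k N, (β i - ind i) := by
    calc ∑ i ∈ Finset.range N, (β i - ind i) * c i
        = ∑ i ∈ Finset.range N, ∑ k ∈ Finset.range (i + 1), (β i - ind i) * e k := by
          apply Finset.sum_congr rfl
          intro i _
          rw [hce i, Finset.mul_sum]
      _ = ∑ i ∈ Finset.Ico 0 N, ∑ k ∈ Finset.Ico 0 (i + 1), (β i - ind i) * e k := by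
          simp only [Finset.range_eq_Ico]
      _ = ∑ k ∈ Finset.Ico 0 N, ∑ i ∈ Finset.Ico k N, (β i - ind i) * e k := by
          rw [Finset.sum_Ico_Ico_comm]
      _ = ∑ k ∈ Finset.range N, e k * ∑ i ∈ Finset.Ico k N, (β i - ind i) := by
          rw [← Finset.range_eq_Ico]
          apply Finset.sum_congr rfl
          intro k _
          rw [Finset.mul_sum]
          apply Finset.sum_congr rfl
          intro i _; ring
  rw [hmain]
  exact Finset.sum_nonneg fun k _ => mul_nonneg (he0 k) (hT k)

theorem stmt_19 (N N₀ : ℕ) (hN₀ : 1 ≤ N₀) (hN : N₀ ≤ N)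
    (α b : Fin N → ℝ) (hα : ∀ i, α i ∈ Set.Icc (0 : ℝ) 1) (hb : ∀ i, 0 ≤ b i)
    (hsum : (N₀ : ℝ) ≤ ∑ i, α i)
    -- `b ∘ σ` is the increasing rearrangement of `b`:
    (σ : Equiv.Perm (Fin N)) (hσ : Monotone (b ∘ σ)) :
    ∑ i ∈ Finset.univ.filter (fun i : Fin N => (i : ℕ) < N₀), b (σ i)
      ≤ ∑ i, α i * b i := by
  have hNpos : 0 < N := lt_of_lt_of_le hN₀ hN
  -- extended sequences on ℕ
  set c : ℕ → ℝ := fun k => b (σ ⟨min k (N - 1), by omega⟩) with hc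
  set β : ℕ → ℝ := fun k => if h : k < N then α (σ ⟨k, h⟩) else 0 with hβ
  have hcval : ∀ i : Fin N, c (i : ℕ) = b (σ i) := by
    intro i
    have : min (i : ℕ) (N - 1) = (i : ℕ) := by omega
    simp only [hc, this]
  have hβval : ∀ i : Fin N, β (i : ℕ) = α (σ i) := by
    intro i
    simp only [hβ, dif_pos i.isLt]
  have hmono : Monotone c := by
    intro k l hkl
    exact hσ (Fin.mk_le_mk.mpr (by omega))
  have hc0 : ∀ k, 0 ≤ c k := fun k => hb _
  have hβ0 : ∀ k, 0 ≤ β k := by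
    intro k; simp only [hβ]; split
    · exact (hα _).1
    · exact le_refl 0
  have hβ1 : ∀ k, β k ≤ 1 := by
    intro k; simp only [hβ]; split
    · exact (hα _).2
    · norm_num
  have hsum' : (N₀ : ℝ) ≤ ∑ i ∈ Finset.range N, β i := by
    rw [← Fin.sum_univ_eq_sum_range β N]
    calc (N₀ : ℝ) ≤ ∑ i, α i := hsum
      _ = ∑ i, α (σ i) := (Equiv.sum_comp σ α).symm
      _ = ∑ i : Fin N, β (i : ℕ) := by
          apply Finset.sum_congr rfl; intro i _; rw [hβval]
  have key := key_lemma N N₀ hN β c hβ0 hβ1 hc0 hmono hsum'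
  have hL : ∑ i ∈ Finset.univ.filter (fun i : Fin N => (i : ℕ) < N₀), b (σ i)
      = ∑ i ∈ Finset.range N₀, c i := by
    rw [Finset.sum_filter]
    have : ∀ i : Fin N, (if (i : ℕ) < N₀ then b (σ i) else 0)
        = (fun k => if k < N₀ then c k else 0) (i : ℕ) := by
      intro i
      by_cases h : (i : ℕ) < N₀ <;> simp [h, hcval]
    rw [Finset.sum_congr rfl fun i _ => this i,
      Fin.sum_univ_eq_sum_range (fun k => if k < N₀ then c k else 0) N,
      ← Finset.sum_filter]
    congr 1
    ext i; simp [Finset.mem_filter]; omega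
  have hR : ∑ i, α i * b i = ∑ i ∈ Finset.range N, β i * c i := by
    rw [← Fin.sum_univ_eq_sum_range (fun k => β k * c k) N]
    calc ∑ i, α i * b i = ∑ i, α (σ i) * b (σ i) :=
          (Equiv.sum_comp σ (fun i => α i * b i)).symm
      _ = ∑ i : Fin N, β (i : ℕ) * c (i : ℕ) := by
          apply Finset.sum_congr rfl; intro i _; rw [hβval, hcval]
  rw [hL, hR]
  exact key
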